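/- arXiv:2506.12864 — 3 statements merged into one kernel-verified Lean document; each statement's English description precedes it below -/
import Mathlib

section
/- For every x ∈ (0, π/2), tan(x) > x + x³/3. -/
open Real

theorem tan_gt_add_cube (x : ℝ) (hx : x ∈ Set.Ioo 0 (π / 2)) :
    x + x ^ 3 / 3 < Real.tan x := by
  obtain ⟨hx0, hx2⟩ := hx
  set f : ℝ → ℝ := fun y => Real.tan y - y - y ^ 3 / 3 with hf
  have hmono : StrictMonoOn f (Set.Ico 0 (π / 2)) := by
    apply strictMonoOn_of_deriv_pos (convex_Ico 0 (π / 2))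
    · apply ContinuousOn.sub (ContinuousOn.sub _ continuousOn_id)
      · exact (continuous_pow 3).continuousOn.div_const 3
      · apply Real.continuousOn_tan.mono
        intro y hy
        simp only [Set.mem_setOf_eq]
        have : Real.cos y > 0 := Real.cos_pos_of_mem_Ioo
          ⟨by linarith [hy.1, Real.pi_pos], by linarith [hy.2]⟩
        exact ne_of_gt this
    · intro y hy
      rw [interior_Ico] at hy
      obtain ⟨hy0, hy2⟩ := hy
      have hcos : Real.cos y > 0 := Real.cos_pos_of_mem_Ioo
        ⟨by linarith [Real.pi_pos], hy2⟩
      have hd : HasDerivAt f (1 / Real.cos y ^ 2 - 1 - y ^ 2) y := by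
        have h1 := Real.hasDerivAt_tan (ne_of_gt hcos)
        have h2 : HasDerivAt (fun y : ℝ => y ^ 3 / 3) (y ^ 2) y := by
          have := (hasDerivAt_pow 3 y).div_const 3
          simpa using this
        exact (h1.sub (hasDerivAt_id y)).sub h2
      rw [hd.deriv]
      have htan : y < Real.tan y := Real.lt_tan hy0 hy2
      have h1 : 1 / Real.cos y ^ 2 = Real.tan y ^ 2 + 1 := by
        rw [Real.tan_eq_sin_div_cos]
        field_simp
        exact (sin_sq_add_cos_sq y).symm
      rw [h1]
      nlinarith
  have h0 : (0 : ℝ) ∈ Set.Ico 0 (π / 2) := ⟨le_refl 0, by linarith⟩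
  have hxm : x ∈ Set.Ico 0 (π / 2) := ⟨le_of_lt hx0, hx2⟩
  have := hmono h0 hxm hx0
  simp only [hf, Real.tan_zero] at this
  linarith
end

section
/- The function x ↦ tan(x)/x is strictly increasing on the open interval (0, π/2). -/
open Real

theorem tan_div_self_strictMonoOn :
    StrictMonoOn (fun x : ℝ => Real.tan x / x) (Set.Ioo 0 (π / 2)) := by
  apply strictMonoOn_of_deriv_pos (convex_Ioo _ _)
  · apply ContinuousOn.div
    · exact Real.continuousOn_tan.mono (fun x hx =>
        (Real.cos_pos_of_mem_Ioo ⟨by linarith [Real.pi_pos, hx.1], hx.2⟩).ne')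
    · exact continuousOn_id
    · intro x hx; exact hx.1.ne'
  · intro x hx
    rw [interior_Ioo] at hx
    obtain ⟨hx0, hx2⟩ := hx
    have hcos : Real.cos x ≠ 0 := by
      have : 0 < Real.cos x := Real.cos_pos_of_mem_Ioo ⟨by linarith [Real.pi_pos], hx2⟩
      exact this.ne'
    have hd : HasDerivAt (fun x : ℝ => Real.tan x / x)
        ((1 / Real.cos x ^ 2 * x - Real.tan x * 1) / x ^ 2) x :=
      (Real.hasDerivAt_tan hcos).div (hasDerivAt_id x) hx0.ne'
    rw [hd.deriv]
    have hcp : 0 < Real.cos x := Real.cos_pos_of_mem_Ioo ⟨by linarith [Real.pi_pos], hx2⟩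
    have hsin : Real.sin x * Real.cos x < x := by
      have h1 : Real.sin x < x := Real.sin_lt hx0
      have h2 : Real.cos x ≤ 1 := Real.cos_le_one x
      have h3 : 0 < Real.sin x := Real.sin_pos_of_pos_of_lt_pi hx0 (by linarith [Real.pi_pos])
      nlinarith
    have hnum : 0 < 1 / Real.cos x ^ 2 * x - Real.tan x * 1 := by
      have : 1 / Real.cos x ^ 2 * x - Real.tan x * 1
          = (x - Real.sin x * Real.cos x) / Real.cos x ^ 2 := by
        rw [Real.tan_eq_sin_div_cos]; field_simp
      rw [this]
      exact div_pos (by linarith) (by positivity)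
    positivity
end

section
/- For every p > 0, the asymptotic expansion of the wasted area holds: n²·(p²/(4π) − p²/(4 n tan(π/n))) → p²π/12 as n → ∞. -/
open Real Filter Set Topology

-- tan x / x → 1 as x → 0⁺ (from the derivative of tan at 0)
lemma tendsto_tan_div_self : Tendsto (fun x : ℝ => Real.tan x / x) (𝓝[>] 0) (𝓝 1) := by
  have h : HasDerivAt Real.tan 1 0 := by
    have := Real.hasDerivAt_tan (x := 0) (by simp)
    simpa using this
  have h2 := hasDerivAt_iff_tendsto_slope.1 h
  have h3 : Tendsto (slope Real.tan 0) (𝓝[>] 0) (𝓝 1) :=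
    h2.mono_left (nhdsWithin_mono _ (fun x hx => ne_of_gt hx))
  refine h3.congr' ?_
  filter_upwards [self_mem_nhdsWithin] with x hx
  simp [slope_def_field]

-- (tan x - x)/x^3 → 1/3 as x → 0⁺, by L'Hôpital
lemma tendsto_tan_sub_div_cube :
    Tendsto (fun x : ℝ => (Real.tan x - x) / x ^ 3) (𝓝[>] 0) (𝓝 (1/3)) := by
  have hπ := Real.pi_pos
  have hab : (0:ℝ) < π / 2 := by positivity
  apply HasDerivAt.lhopital_zero_right_on_Ioo hab
    (f' := fun x => Real.tan x ^ 2) (g' := fun x => 3 * x ^ 2)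
  · intro x hx
    have hcos : Real.cos x ≠ 0 :=
      ne_of_gt (Real.cos_pos_of_mem_Ioo ⟨by linarith [hx.1], hx.2⟩)
    have h := (Real.hasDerivAt_tan hcos).sub (hasDerivAt_id x)
    have h : HasDerivAt (fun y => Real.tan y - y) (1 / Real.cos x ^ 2 - 1) x := h
    convert h using 1
    rw [Real.tan_eq_sin_div_cos, div_pow]
    field_simp
    nlinarith [Real.sin_sq_add_cos_sq x]
  · intro x _
    simpa using (hasDerivAt_pow 3 x)
  · intro x hx
    have : x ≠ 0 := ne_of_gt hx.1
    positivity
  · have h : Tendsto (fun x : ℝ => Real.tan x - x) (𝓝 0) (𝓝 0) := by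
      have h := (((Real.continuousAt_tan (x := 0)).2 (by simp)).sub continuousAt_id).tendsto
      have h : Tendsto (fun x : ℝ => Real.tan x - x) (𝓝 0) (𝓝 (Real.tan 0 - id 0)) := h
      simpa using h
    exact h.mono_left nhdsWithin_le_nhds
  · have h : Tendsto (fun x : ℝ => x ^ 3) (𝓝 0) (𝓝 0) := by
      simpa using (continuous_pow 3).tendsto (0:ℝ)
    exact h.mono_left nhdsWithin_le_nhds
  · have h1 : Tendsto (fun x : ℝ => (Real.tan x / x) ^ 2 / 3) (𝓝[>] 0) (𝓝 (1/3)) := by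
      have := (tendsto_tan_div_self.pow 2).div_const 3
      simpa using this
    refine h1.congr' ?_
    filter_upwards [self_mem_nhdsWithin] with x hx
    have hx0 : x ≠ 0 := ne_of_gt hx
    rw [div_pow]
    ring

theorem wasted_area_asymptotics (p : ℝ) (hp : 0 < p) :
    Filter.Tendsto
      (fun n : ℕ => (n : ℝ) ^ 2 * (p ^ 2 / (4 * π) - p ^ 2 / (4 * n * Real.tan (π / n))))
      Filter.atTop (nhds (p ^ 2 * π / 12)) := by
  have hπ := Real.pi_pos
  set F : ℝ → ℝ := fun x => p ^ 2 * π / 4 * ((Real.tan x - x) / x ^ 3 * (x / Real.tan x))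
    with hFdef
  have hB : Tendsto (fun x : ℝ => x / Real.tan x) (𝓝[>] 0) (𝓝 1) := by
    have h := tendsto_tan_div_self.inv₀ one_ne_zero
    rw [inv_one] at h
    exact h.congr fun x => inv_div _ _
  have hF : Tendsto F (𝓝[>] 0) (𝓝 (p ^ 2 * π / 12)) := by
    have h := (tendsto_tan_sub_div_cube.mul hB).const_mul (p ^ 2 * π / 4)
    convert h using 2
    ring
  have hcomp : Tendsto (fun n : ℕ => π / (n : ℝ)) atTop (𝓝[>] 0) := by
    rw [tendsto_nhdsWithin_iff]
    constructor
    · exact tendsto_const_div_atTop_nhds_zero_nat π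
    · filter_upwards [eventually_ge_atTop 1] with n hn
      have : (0:ℝ) < (n : ℝ) := by exact_mod_cast Nat.lt_of_lt_of_le Nat.zero_lt_one hn
      exact div_pos hπ this
  refine (hF.comp hcomp).congr' ?_
  filter_upwards [eventually_ge_atTop 3] with n hn
  have hn0 : (0:ℝ) < (n : ℝ) := by exact_mod_cast Nat.lt_of_lt_of_le (by norm_num) hn
  set x := π / (n : ℝ) with hx
  have hx0 : 0 < x := div_pos hπ hn0
  have hxlt : x < π / 2 := by
    rw [hx, div_lt_div_iff₀ hn0 (by norm_num)]
    have : (3:ℝ) ≤ (n : ℝ) := by exact_mod_cast hn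
    nlinarith
  have ht : 0 < Real.tan x := Real.tan_pos_of_pos_of_lt_pi_div_two hx0 hxlt
  show F x = _
  rw [hFdef]
  have hxn : x * (n : ℝ) = π := by
    rw [hx]; field_simp
  have hπne : π ≠ 0 := ne_of_gt hπ
  field_simp
  rw [hx]
  field_simp
end
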